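/- The common neighborhood energy of the star graph K_{1,n} (n ≥ 1), defined as the sum of the absolute values of the eigenvalues of its common neighborhood matrix, equals 2n - 2. -/

import Mathlib

open Polynomial Matrix

theorem star_cn_energy (n : ℕ) (hn : 1 ≤ n)
    (CN : Matrix (Fin (n + 1)) (Fin (n + 1)) ℝ)
    (hCN : ∀ i j, CN i j = if i ≠ j ∧ i ≠ 0 ∧ j ≠ 0 then 1 else 0) :
    (CN.charpoly.roots.map (fun x => |x|)).sum = 2 * (n : ℝ) - 2 := by
  set w : Fin (n+1) → ℝ := fun i => if i = 0 then 0 else 1 with hw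
  have key : ∀ t : ℝ, t ≠ 0 → t ≠ -1 →
      (scalar (Fin (n+1)) t - CN).det = t * (t+1)^(n-1) * (t - ((n:ℝ) - 1)) := by
    intro t ht ht1
    have ht1' : t + 1 ≠ 0 := fun h => ht1 (by linarith)
    have hD : scalar (Fin (n+1)) t - CN =
        diagonal (fun i => t + w i) + replicateCol Unit (-w) * replicateRow Unit w := by
      ext i j
      simp only [Matrix.sub_apply, Matrix.add_apply, Matrix.mul_apply, scalar_apply,
        diagonal_apply, replicateCol_apply, replicateRow_apply, Finset.univ_unique, Finset.sum_singleton,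
        hCN, hw, Pi.neg_apply]
      by_cases hij : i = j <;> by_cases hi : i = 0 <;> by_cases hj : j = 0 <;>
        simp [hij, hi, hj]
    have hdiagne : ∀ i, t + w i ≠ 0 := by
      intro i; by_cases hi : i = 0 <;> simp [hw, hi, ht, ht1']
    have hdet : (diagonal (fun i => t + w i)).det = t * (t+1)^n := by
      rw [det_diagonal, Fin.prod_univ_succ]
      simp [hw, Fin.succ_ne_zero]
    have hunit : IsUnit (diagonal (fun i => t + w i)).det := by
      rw [hdet]
      exact isUnit_iff_ne_zero.2 (mul_ne_zero ht (pow_ne_zero _ ht1'))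
    rw [hD, det_add_replicateCol_mul_replicateRow hunit, hdet, det_unique]
    have hDinv : (diagonal fun i => t + w i)⁻¹ = diagonal (fun i => (t + w i)⁻¹) := by
      apply inv_eq_right_inv
      rw [diagonal_mul_diagonal]
      convert diagonal_one with i
      exact mul_inv_cancel₀ (hdiagne i)
    have hentry : ((1 + replicateRow Unit w * (diagonal fun i => t + w i)⁻¹ * replicateCol Unit (-w) :
        Matrix Unit Unit ℝ)) default default = 1 - n * (t+1)⁻¹ := by
      rw [hDinv]
      simp only [Matrix.add_apply, one_apply_eq, Matrix.mul_apply, replicateRow_apply, replicateCol_apply,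
        diagonal_apply, Pi.neg_apply, mul_ite, mul_zero, ite_mul, zero_mul,
        Finset.sum_ite_eq, Finset.mem_univ, if_true]
      rw [Fin.sum_univ_succ]
      simp [hw, Fin.succ_ne_zero, Finset.sum_const, add_comm]
      ring
    rw [hentry]
    have hpow : (t+1)^n = (t+1)^(n-1) * (t+1) := by
      rw [← pow_succ, Nat.sub_add_cancel hn]
    rw [hpow]
    field_simp
    ring
  have hev : ∀ t : ℝ, eval t CN.charpoly = (scalar (Fin (n+1)) t - CN).det := by
    intro t
    rw [Matrix.charpoly, eval_det, matPolyEquiv_charmatrix]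
    simp
  have hq : CN.charpoly = X * (X - C (-1:ℝ))^(n-1) * (X - C ((n:ℝ)-1)) := by
    apply eq_of_infinite_eval_eq
    apply Set.Infinite.mono (s := ({0, -1} : Set ℝ)ᶜ)
    · intro x hx
      simp only [Set.mem_compl_iff, Set.mem_insert_iff, Set.mem_singleton_iff, not_or] at hx
      simp only [Set.mem_setOf_eq, hev, key x hx.1 hx.2]
      simp [eval_mul, eval_pow]
    · exact Set.Finite.infinite_compl (by simp)
  have h1 : (X : ℝ[X]) * (X - C (-1))^(n-1) ≠ 0 :=
    (monic_X.mul ((monic_X_sub_C _).pow _)).ne_zero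
  have h2 : (X : ℝ[X]) * (X - C (-1))^(n-1) * (X - C ((n:ℝ)-1)) ≠ 0 :=
    ((monic_X.mul ((monic_X_sub_C _).pow _)).mul (monic_X_sub_C _)).ne_zero
  have hroots : CN.charpoly.roots = ({0} + (n-1) • {(-1:ℝ)}) + {(n:ℝ)-1} := by
    rw [hq, roots_mul h2, roots_mul h1, roots_X, roots_pow, roots_X_sub_C, roots_X_sub_C]
  rw [hroots]
  simp only [Multiset.nsmul_singleton, Multiset.map_add, Multiset.sum_add,
    Multiset.map_singleton, Multiset.sum_singleton, Multiset.map_replicate,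
    Multiset.sum_replicate, abs_zero, abs_neg, abs_one]
  rw [abs_of_nonneg (by simp [sub_nonneg]; exact_mod_cast hn)]
  rw [nsmul_eq_mul, Nat.cast_sub hn]
  push_cast
  ring
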